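/- For all m > 0 and nonnegative integers n, n', ρ, ρ' (with ρ ≤ n, ρ' ≤ n'), one has K_R(q^m, n+n', ρ+ρ') ≤ K_R(q^m,n,ρ)·K_R(q^m,n',ρ'). In particular K_R(q^m,n+1,ρ+1) ≤ K_R(q^m,n,ρ) and K_R(q^m,n+1,ρ) ≤ q^m·K_R(q^m,n,ρ). -/
import Mathlib


open scoped BigOperators

noncomputable section

/-- The rank weight of a vector over the extension field `Fqm`, with respect to the base
field `Fq`: the dimension over `Fq` of the `Fq`-span of the coordinates. -/
def rankWeight (Fq : Type) {Fqm : Type} [Field Fq] [Field Fqm] [Algebra Fq Fqm]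
    {n : ℕ} (x : Fin n → Fqm) : ℕ :=
  Module.finrank Fq (Submodule.span Fq (Set.range x))

/-- An elementary linear subspace: a subspace generated by vectors all of whose
coordinates lie in the base field `Fq`. -/
def IsELS (Fq : Type) {Fqm : Type} [Field Fq] [Field Fqm] [Algebra Fq Fqm]
    {n : ℕ} (V : Submodule Fqm (Fin n → Fqm)) : Prop :=
  ∃ S : Set (Fin n → Fqm),
    (∀ s ∈ S, ∀ i, s i ∈ Set.range (algebraMap Fq Fqm)) ∧
    V = Submodule.span Fqm S

/-- The ball of rank radius `r` centered at `c`. -/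
def rankBall (Fq : Type) {Fqm : Type} [Field Fq] [Field Fqm] [Algebra Fq Fqm]
    {n : ℕ} (r : ℕ) (c : Fin n → Fqm) : Set (Fin n → Fqm) :=
  {y | rankWeight Fq (y - c) ≤ r}

/-- `V_r(q^m, n)`: the volume of a ball of rank radius `r`. -/
def ballVol (Fq Fqm : Type) [Field Fq] [Field Fqm] [Algebra Fq Fqm]
    (n r : ℕ) : ℕ :=
  Nat.card ↥(rankBall Fq r (0 : Fin n → Fqm))

/-- `K_R(q^m, n, ρ)`: minimum cardinality of a nonempty code of length `n` with rank
covering radius at most `ρ`. -/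
def coveringNumber (Fq Fqm : Type) [Field Fq] [Field Fqm] [Algebra Fq Fqm]
    (n ρ : ℕ) : ℕ :=
  sInf {k : ℕ | ∃ C : Finset (Fin n → Fqm), C.Nonempty ∧
    (∀ x : Fin n → Fqm, ∃ c ∈ C, rankWeight Fq (x - c) ≤ ρ) ∧ C.card = k}

/-- `σ(q) = (1/ln q) Σ_{k≥1} 1/(k(q^k - 1))`. -/
def sigmaQ (q : ℕ) : ℝ :=
  (1 / Real.log q) * ∑' k : ℕ, 1 / (((k : ℝ) + 1) * ((q : ℝ) ^ (k + 1) - 1))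

/-- `α(e, u) = ∏_{i=0}^{u-1} (q^e - q^i)` (with integer exponent `e`). -/
def alphaQ (q : ℕ) (e : ℤ) (u : ℕ) : ℚ :=
  ∏ i ∈ Finset.range u, ((q : ℚ) ^ e - (q : ℚ) ^ i)

/-- The Gaussian binomial `[n u]_q = α(n,u)/α(u,u)`. -/
def gaussQ (q n u : ℕ) : ℚ := alphaQ q n u / alphaQ q u u


set_option linter.unusedSectionVars false

section Helpers

variable (Fq : Type) {Fqm : Type} [Field Fq] [Fintype Fq] [Field Fqm] [Fintype Fqm]
  [Algebra Fq Fqm]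

lemma rankWeight_le {n : ℕ} (x : Fin n → Fqm) : rankWeight Fq x ≤ n := by
  classical
  have h1 := finrank_span_le_card (R := Fq) (Set.range x)
  refine h1.trans ?_
  have : (Set.range x).toFinset = Finset.image x Finset.univ := by
    ext y; simp
  rw [this]
  exact (Finset.card_image_le).trans (by simp)

lemma rankWeight_zero {n : ℕ} : rankWeight Fq (0 : Fin n → Fqm) = 0 := by
  have h : Submodule.span Fq (Set.range (0 : Fin n → Fqm)) = ⊥ := by
    refine le_antisymm (Submodule.span_le.2 ?_) bot_le
    rintro y ⟨i, rfl⟩; simp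
  simp [rankWeight, h]

lemma range_split {n n' : ℕ} (x : Fin (n + n') → Fqm) :
    Set.range x = Set.range (x ∘ Fin.castAdd n') ∪ Set.range (x ∘ Fin.natAdd n) := by
  ext y
  constructor
  · rintro ⟨i, rfl⟩
    refine Fin.addCases (fun j => ?_) (fun j => ?_) i
    · exact Or.inl ⟨j, rfl⟩
    · exact Or.inr ⟨j, rfl⟩
  · rintro (⟨j, rfl⟩ | ⟨j, rfl⟩) <;> exact ⟨_, rfl⟩

lemma rankWeight_concat_le {n n' : ℕ} (x : Fin (n + n') → Fqm) :
    rankWeight Fq x ≤ rankWeight Fq (x ∘ Fin.castAdd n') + rankWeight Fq (x ∘ Fin.natAdd n) := by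
  unfold rankWeight
  rw [range_split x, Submodule.span_union]
  exact Submodule.finrank_add_le_finrank_add_finrank _ _

lemma exists_min_code (n ρ : ℕ) :
    ∃ C : Finset (Fin n → Fqm), C.Nonempty ∧
      (∀ x : Fin n → Fqm, ∃ c ∈ C, rankWeight Fq (x - c) ≤ ρ) ∧
      C.card = coveringNumber Fq Fqm n ρ := by
  classical
  have hne : {k : ℕ | ∃ C : Finset (Fin n → Fqm), C.Nonempty ∧
      (∀ x : Fin n → Fqm, ∃ c ∈ C, rankWeight Fq (x - c) ≤ ρ) ∧ C.card = k}.Nonempty := by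
    refine ⟨(Finset.univ : Finset (Fin n → Fqm)).card, Finset.univ, Finset.univ_nonempty, ?_, rfl⟩
    intro x
    exact ⟨x, Finset.mem_univ x, by simp [rankWeight_zero]⟩
  exact Nat.sInf_mem hne

lemma coveringNumber_le (n ρ : ℕ) (C : Finset (Fin n → Fqm)) (hne : C.Nonempty)
    (hcov : ∀ x : Fin n → Fqm, ∃ c ∈ C, rankWeight Fq (x - c) ≤ ρ) :
    coveringNumber Fq Fqm n ρ ≤ C.card :=
  Nat.sInf_le ⟨C, hne, hcov, rfl⟩

lemma cov_subadd (n n' ρ ρ' : ℕ) :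
    coveringNumber Fq Fqm (n + n') (ρ + ρ')
      ≤ coveringNumber Fq Fqm n ρ * coveringNumber Fq Fqm n' ρ' := by
  classical
  obtain ⟨C, hCne, hCcov, hCcard⟩ := exists_min_code Fq (Fqm := Fqm) n ρ
  obtain ⟨C', hC'ne, hC'cov, hC'card⟩ := exists_min_code Fq (Fqm := Fqm) n' ρ'
  set D : Finset (Fin (n + n') → Fqm) :=
    (C ×ˢ C').image (fun p => Fin.append p.1 p.2) with hD
  have hDne : D.Nonempty := (hCne.product hC'ne).image _
  have hDcov : ∀ x : Fin (n + n') → Fqm, ∃ c ∈ D, rankWeight Fq (x - c) ≤ ρ + ρ' := by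
    intro x
    obtain ⟨c, hc, hc1⟩ := hCcov (x ∘ Fin.castAdd n')
    obtain ⟨c', hc', hc'1⟩ := hC'cov (x ∘ Fin.natAdd n)
    refine ⟨Fin.append c c', Finset.mem_image.2 ⟨(c, c'), Finset.mem_product.2 ⟨hc, hc'⟩, rfl⟩, ?_⟩
    have h1 : (x - Fin.append c c') ∘ Fin.castAdd n' = (x ∘ Fin.castAdd n') - c := by
      funext i; simp [Fin.append_left]
    have h2 : (x - Fin.append c c') ∘ Fin.natAdd n = (x ∘ Fin.natAdd n) - c' := by
      funext i; simp [Fin.append_right]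
    calc rankWeight Fq (x - Fin.append c c')
        ≤ rankWeight Fq ((x - Fin.append c c') ∘ Fin.castAdd n')
          + rankWeight Fq ((x - Fin.append c c') ∘ Fin.natAdd n) :=
          rankWeight_concat_le Fq _
      _ ≤ ρ + ρ' := by rw [h1, h2]; exact Nat.add_le_add hc1 hc'1
  calc coveringNumber Fq Fqm (n + n') (ρ + ρ') ≤ D.card :=
        coveringNumber_le Fq _ _ D hDne hDcov
    _ ≤ C.card * C'.card := (Finset.card_image_le).trans (by rw [Finset.card_product])
    _ = _ := by rw [hCcard, hC'card]

end Helpers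

/-- Subadditivity of the covering number:
`K_R(q^m, n+n', ρ+ρ') ≤ K_R(q^m,n,ρ) K_R(q^m,n',ρ')`, and the particular cases
`K_R(q^m,n+1,ρ+1) ≤ K_R(q^m,n,ρ)` and `K_R(q^m,n+1,ρ) ≤ q^m K_R(q^m,n,ρ)`. -/
theorem stmt10 (q m n n' ρ ρ' : ℕ) (Fq Fqm : Type) [Field Fq] [Fintype Fq] [Field Fqm]
    [Fintype Fqm] [Algebra Fq Fqm]
    (hq : Fintype.card Fq = q) (hm : Module.finrank Fq Fqm = m) (hm0 : 0 < m)
    (hρ : ρ ≤ n) (hρ' : ρ' ≤ n') :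
    coveringNumber Fq Fqm (n + n') (ρ + ρ')
        ≤ coveringNumber Fq Fqm n ρ * coveringNumber Fq Fqm n' ρ' ∧
    coveringNumber Fq Fqm (n + 1) (ρ + 1) ≤ coveringNumber Fq Fqm n ρ ∧
    coveringNumber Fq Fqm (n + 1) ρ ≤ q ^ m * coveringNumber Fq Fqm n ρ := by
  classical
  have part1 : ∀ a b c d : ℕ, coveringNumber Fq Fqm (a + b) (c + d)
      ≤ coveringNumber Fq Fqm a c * coveringNumber Fq Fqm b d :=
    fun a b c d => cov_subadd Fq a b c d
  refine ⟨part1 n n' ρ ρ', ?_, ?_⟩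
  · have h11 : coveringNumber Fq Fqm 1 1 ≤ 1 := by
      have h := coveringNumber_le Fq (Fqm := Fqm) 1 1 {(0 : Fin 1 → Fqm)}
        (Finset.singleton_nonempty _)
        (fun x => ⟨0, Finset.mem_singleton_self _, by
          rw [sub_zero]; exact rankWeight_le Fq x⟩)
      rwa [Finset.card_singleton] at h
    calc coveringNumber Fq Fqm (n + 1) (ρ + 1)
        ≤ coveringNumber Fq Fqm n ρ * coveringNumber Fq Fqm 1 1 := part1 n 1 ρ 1
      _ ≤ coveringNumber Fq Fqm n ρ * 1 := Nat.mul_le_mul_left _ h11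
      _ = coveringNumber Fq Fqm n ρ := by ring
  · have h10 : coveringNumber Fq Fqm 1 0 ≤ q ^ m := by
      have hcard : Fintype.card Fqm = q ^ m := by
        rw [← hq, ← hm]; exact Module.card_eq_pow_finrank (K := Fq) (V := Fqm)
      have h := coveringNumber_le Fq (Fqm := Fqm) 1 0 Finset.univ Finset.univ_nonempty
        (fun x => ⟨x, Finset.mem_univ _, by rw [sub_self]; rw [rankWeight_zero]⟩)
      calc coveringNumber Fq Fqm 1 0 ≤ (Finset.univ : Finset (Fin 1 → Fqm)).card := h
        _ = Fintype.card (Fin 1 → Fqm) := rfl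
        _ = Fintype.card Fqm ^ 1 := Fintype.card_fun ..
        _ = q ^ m := by rw [pow_one, hcard]
    calc coveringNumber Fq Fqm (n + 1) ρ
        = coveringNumber Fq Fqm (n + 1) (ρ + 0) := by norm_num
      _ ≤ coveringNumber Fq Fqm n ρ * coveringNumber Fq Fqm 1 0 := part1 n 1 ρ 0
      _ ≤ coveringNumber Fq Fqm n ρ * (q ^ m) := Nat.mul_le_mul_left _ h10
      _ = q ^ m * coveringNumber Fq Fqm n ρ := Nat.mul_comm _ _


end
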